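/- Let (Ω, ν) be a finite measure space, α > 0, and a ≤ 0 ≤ b real numbers. Define σ : L²(Ω; ℝ) → ℝ by σ(μ) = ∫_Ω max(a μ(x), b μ(x)) dν(x), and let Π_{[a,b]} : ℝ → ℝ be the clamp Π_{[a,b]}(t) = min(max(t, a), b). Then for every c ∈ L²(Ω; ℝ), the function μ ↦ (1/(2α))‖μ − c‖²_{L²} + σ(μ) has a unique minimizer over L²(Ω; ℝ), given pointwise a.e. by μ*(x) = c(x) − α Π_{[a,b]}(c(x)/α). -/

import Mathlib

open MeasureTheory

lemma key_pt (α a b c t : ℝ) (hα : 0 < α) (ha : a ≤ 0) (hb : 0 ≤ b) :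
    (1 / (2 * α)) * ((c - α * min (max (c / α) a) b) - c) ^ 2
      + max (a * (c - α * min (max (c / α) a) b)) (b * (c - α * min (max (c / α) a) b))
      + (1 / (2 * α)) * (t - (c - α * min (max (c / α) a) b)) ^ 2
    ≤ (1 / (2 * α)) * (t - c) ^ 2 + max (a * t) (b * t) := by
  set p := min (max (c / α) a) b with hp
  set ts := c - α * p with hts
  have hab : a ≤ b := ha.trans hb
  have hpa : a ≤ p := le_min (le_max_right _ _) hab
  have hpb : p ≤ b := min_le_right _ _
  have h1 : p * t ≤ max (a * t) (b * t) := by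
    rcases le_total t 0 with h | h
    · calc p * t ≤ a * t := mul_le_mul_of_nonpos_right hpa h
        _ ≤ _ := le_max_left _ _
    · calc p * t ≤ b * t := mul_le_mul_of_nonneg_right hpb h
        _ ≤ _ := le_max_right _ _
  have h2 : max (a * ts) (b * ts) = p * ts := by
    rcases le_total (c / α) a with h | h
    · have hpa' : p = a := by rw [hp, max_eq_right h, min_eq_left hab]
      have hts0 : ts ≤ 0 := by
        rw [hts, hpa']
        have : c ≤ α * a := by rw [div_le_iff₀ hα] at h; linarith [h]
        linarith
      rw [hpa', max_eq_left (by nlinarith)]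
    · rcases le_total (c / α) b with h' | h'
      · have hpc : p = c / α := by rw [hp, max_eq_left h, min_eq_left h']
        have : ts = 0 := by rw [hts, hpc]; field_simp; ring
        simp [this]
      · have hpb' : p = b := by
          rw [hp]
          rcases le_total (c/α) a with h'' | h''
          · rw [max_eq_right h'', min_eq_left hab]; linarith
          · rw [max_eq_left h'', min_eq_right h']
        have hts0 : 0 ≤ ts := by
          rw [hts, hpb']
          have : α * b ≤ c := by rw [le_div_iff₀ hα] at h'; linarith
          linarith
        rw [hpb', max_eq_right (by nlinarith)]
  have expand : (1 / (2 * α)) * (t - c) ^ 2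
      = (1 / (2 * α)) * (ts - c) ^ 2 + (1 / (2 * α)) * (t - ts) ^ 2 - p * t + p * ts := by
    rw [hts]; field_simp; ring
  rw [show (c - α * p - c) = ts - c from by rw [hts]] at *
  rw [h2]
  linarith [h1, expand.le, expand.ge]

lemma norm_sq_L2 {Ω : Type*} [MeasurableSpace Ω] (ν : Measure Ω) (g : Lp ℝ 2 ν) :
    ‖g‖ ^ 2 = ∫ x, (g x) ^ 2 ∂ν := by
  rw [← real_inner_self_eq_norm_sq, L2.inner_def]
  simp [RCLike.inner_apply, sq]

lemma integrable_max_lin {Ω : Type*} [MeasurableSpace Ω] (ν : Measure Ω) [IsFiniteMeasure ν]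
    (a b : ℝ) (μ : Lp ℝ 2 ν) :
    Integrable (fun x => max (a * μ x) (b * μ x)) ν := by
  have hμ : Integrable (fun x => μ x) ν := (Lp.memLp μ).integrable (by norm_num)
  refine Integrable.mono' ((hμ.norm.const_mul (max |a| |b|))) ?_ ?_
  · exact ((Lp.aestronglyMeasurable μ).const_smul a).sup
      ((Lp.aestronglyMeasurable μ).const_smul b)
  · filter_upwards with x
    have h1 : |a * μ x| ≤ max |a| |b| * |μ x| := by
      rw [abs_mul]
      exact mul_le_mul_of_nonneg_right (le_max_left _ _) (abs_nonneg _)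
    have h2 : |b * μ x| ≤ max |a| |b| * |μ x| := by
      rw [abs_mul]
      exact mul_le_mul_of_nonneg_right (le_max_right _ _) (abs_nonneg _)
    have := abs_max_le_max_abs_abs (a := a * μ x) (b := b * μ x)
    simp only [Real.norm_eq_abs]
    calc |max (a * μ x) (b * μ x)| ≤ max |a * μ x| |b * μ x| := this
      _ ≤ max |a| |b| * |μ x| := max_le h1 h2

/-- Closed-form (Moreau-type) solution of the μ-subproblem of the majorized ABCD
algorithm: for `σ(μ) = ∫ max(a μ(x), b μ(x)) dν` (the support function of
`U_ad = {v : a ≤ v ≤ b a.e.}`), the function `μ ↦ (1/(2α))‖μ − c‖² + σ(μ)` has a unique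
minimizer over `L²(Ω)`, given a.e. by `μ*(x) = c(x) − α Π_{[a,b]}(c(x)/α)`. -/
theorem mu_subproblem_L2_closed_form
    {Ω : Type*} [MeasurableSpace Ω] (ν : Measure Ω) [IsFiniteMeasure ν]
    (α a b : ℝ) (hα : 0 < α) (ha : a ≤ 0) (hb : 0 ≤ b)
    (c : Lp ℝ 2 ν) :
    ∃ μs : Lp ℝ 2 ν,
      (∀ μ : Lp ℝ 2 ν,
          (1 / (2 * α)) * ‖μs - c‖ ^ 2 + ∫ x, max (a * μs x) (b * μs x) ∂ν
            ≤ (1 / (2 * α)) * ‖μ - c‖ ^ 2 + ∫ x, max (a * μ x) (b * μ x) ∂ν) ∧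
      (∀ μ' : Lp ℝ 2 ν,
          (∀ μ : Lp ℝ 2 ν,
            (1 / (2 * α)) * ‖μ' - c‖ ^ 2 + ∫ x, max (a * μ' x) (b * μ' x) ∂ν
              ≤ (1 / (2 * α)) * ‖μ - c‖ ^ 2 + ∫ x, max (a * μ x) (b * μ x) ∂ν) →
          μ' = μs) ∧
      (∀ᵐ x ∂ν, μs x = c x - α * min (max (c x / α) a) b) := by
  have hab : a ≤ b := ha.trans hb
  -- the clamp function
  set f : Ω → ℝ := fun x => min (max (c x / α) a) b with hf
  have hfmeas : AEStronglyMeasurable f ν := by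
    apply AEStronglyMeasurable.inf _ aestronglyMeasurable_const
    apply AEStronglyMeasurable.sup _ aestronglyMeasurable_const
    simpa [div_eq_mul_inv] using (Lp.aestronglyMeasurable c).mul_const α⁻¹
  have hfbd : ∀ x, ‖f x‖ ≤ max (-a) b := by
    intro x
    rw [Real.norm_eq_abs, abs_le]
    constructor
    · have : a ≤ f x := le_min (le_max_right _ _) hab
      have : -(max (-a) b) ≤ a := by
        have := le_max_left (-a) b; linarith
      linarith [le_min (le_max_right (c x / α) a) hab]
    · exact le_trans (min_le_right _ _) (le_max_right _ _)
  have hfmem : MemLp f 2 ν :=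
    MemLp.of_bound hfmeas (max (-a) b) (Filter.Eventually.of_forall hfbd)
  set μs : Lp ℝ 2 ν := c - α • hfmem.toLp f with hμs
  have hμs_ae : ∀ᵐ x ∂ν, μs x = c x - α * f x := by
    filter_upwards [Lp.coeFn_sub c (α • hfmem.toLp f), Lp.coeFn_smul α (hfmem.toLp f),
      hfmem.coeFn_toLp] with x h1 h2 h3
    rw [hμs, h1, Pi.sub_apply, h2, Pi.smul_apply, h3, smul_eq_mul]
  -- integral form of the quadratic term
  have hnorm : ∀ μ : Lp ℝ 2 ν, ‖μ - c‖ ^ 2 = ∫ x, (μ x - c x) ^ 2 ∂ν := by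
    intro μ
    rw [norm_sq_L2]
    refine integral_congr_ae ?_
    filter_upwards [Lp.coeFn_sub μ c] with x h
    rw [h, Pi.sub_apply]
  have hintsq : ∀ μ : Lp ℝ 2 ν, Integrable (fun x => (μ x - c x) ^ 2) ν := by
    intro μ
    have := (Lp.memLp (μ - c)).integrable_sq
    refine this.congr ?_
    filter_upwards [Lp.coeFn_sub μ c] with x h
    rw [h, Pi.sub_apply]
  -- the strong-convexity inequality
  have hkey : ∀ μ : Lp ℝ 2 ν,
      ((1 / (2 * α)) * ‖μs - c‖ ^ 2 + ∫ x, max (a * μs x) (b * μs x) ∂ν)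
        + (1 / (2 * α)) * ‖μ - μs‖ ^ 2
      ≤ (1 / (2 * α)) * ‖μ - c‖ ^ 2 + ∫ x, max (a * μ x) (b * μ x) ∂ν := by
    intro μ
    have hptwise : ∀ᵐ x ∂ν,
        (1 / (2 * α)) * (μs x - c x) ^ 2 + max (a * μs x) (b * μs x)
          + (1 / (2 * α)) * (μ x - μs x) ^ 2
        ≤ (1 / (2 * α)) * (μ x - c x) ^ 2 + max (a * μ x) (b * μ x) := by
      filter_upwards [hμs_ae] with x hx
      rw [hx]
      exact key_pt α a b (c x) (μ x) hα ha hb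
    have hI1 : Integrable (fun x => (1 / (2 * α)) * (μs x - c x) ^ 2) ν :=
      (hintsq μs).const_mul _
    have hI2 : Integrable (fun x => max (a * μs x) (b * μs x)) ν :=
      integrable_max_lin ν a b μs
    have hI3 : Integrable (fun x => (1 / (2 * α)) * (μ x - μs x) ^ 2) ν := by
      have := (Lp.memLp (μ - μs)).integrable_sq
      refine ((this.congr ?_).const_mul _)
      filter_upwards [Lp.coeFn_sub μ μs] with x h
      rw [h, Pi.sub_apply]
    have hI4 : Integrable (fun x => (1 / (2 * α)) * (μ x - c x) ^ 2) ν :=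
      (hintsq μ).const_mul _
    have hI5 : Integrable (fun x => max (a * μ x) (b * μ x)) ν :=
      integrable_max_lin ν a b μ
    have hmono := integral_mono_ae ((hI1.add hI2).add hI3) (hI4.add hI5) hptwise
    simp only [Pi.add_apply] at hmono
    have eL : ∫ x, (1 / (2 * α) * (μs x - c x) ^ 2 + max (a * μs x) (b * μs x)
          + 1 / (2 * α) * (μ x - μs x) ^ 2) ∂ν
        = (∫ x, (1 / (2 * α) * (μs x - c x) ^ 2 + max (a * μs x) (b * μs x)) ∂ν)
          + ∫ x, 1 / (2 * α) * (μ x - μs x) ^ 2 ∂ν := integral_add (hI1.add hI2) hI3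
    have eL2 : ∫ x, (1 / (2 * α) * (μs x - c x) ^ 2 + max (a * μs x) (b * μs x)) ∂ν
        = (∫ x, 1 / (2 * α) * (μs x - c x) ^ 2 ∂ν)
          + ∫ x, max (a * μs x) (b * μs x) ∂ν := integral_add hI1 hI2
    have eR : ∫ x, (1 / (2 * α) * (μ x - c x) ^ 2 + max (a * μ x) (b * μ x)) ∂ν
        = (∫ x, 1 / (2 * α) * (μ x - c x) ^ 2 ∂ν)
          + ∫ x, max (a * μ x) (b * μ x) ∂ν := integral_add hI4 hI5
    have eC1 : ∫ x, 1 / (2 * α) * (μs x - c x) ^ 2 ∂ν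
        = 1 / (2 * α) * ∫ x, (μs x - c x) ^ 2 ∂ν := MeasureTheory.integral_const_mul _ _
    have eC2 : ∫ x, 1 / (2 * α) * (μ x - c x) ^ 2 ∂ν
        = 1 / (2 * α) * ∫ x, (μ x - c x) ^ 2 ∂ν := MeasureTheory.integral_const_mul _ _
    have eC3 : ∫ x, 1 / (2 * α) * (μ x - μs x) ^ 2 ∂ν
        = 1 / (2 * α) * ∫ x, (μ x - μs x) ^ 2 ∂ν := MeasureTheory.integral_const_mul _ _
    have hn1 : ‖μs - c‖ ^ 2 = ∫ x, (μs x - c x) ^ 2 ∂ν := hnorm μs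
    have hn2 : ‖μ - c‖ ^ 2 = ∫ x, (μ x - c x) ^ 2 ∂ν := hnorm μ
    have hn3 : ‖μ - μs‖ ^ 2 = ∫ x, (μ x - μs x) ^ 2 ∂ν := by
      rw [norm_sq_L2]
      refine integral_congr_ae ?_
      filter_upwards [Lp.coeFn_sub μ μs] with x h
      rw [h, Pi.sub_apply]
    rw [hn1, hn2, hn3]
    linarith [hmono, eL, eL2, eR, eC1, eC2, eC3]
  have hαpos : 0 < 1 / (2 * α) := by positivity
  refine ⟨μs, ?_, ?_, ?_⟩
  · intro μ
    have h1 := hkey μ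
    have h2 : 0 ≤ (1 / (2 * α)) * ‖μ - μs‖ ^ 2 := by positivity
    linarith
  · intro μ' hμ'
    have h1 := hμ' μs
    have h2 := hkey μ'
    have h3 : (1 / (2 * α)) * ‖μ' - μs‖ ^ 2 ≤ 0 := by linarith
    have h4 : ‖μ' - μs‖ ^ 2 ≤ 0 := by
      by_contra h
      push_neg at h
      nlinarith
    have h5 : ‖μ' - μs‖ = 0 := by
      have := sq_nonneg ‖μ' - μs‖
      have : ‖μ' - μs‖ ^ 2 = 0 := le_antisymm h4 this
      exact pow_eq_zero_iff (n := 2) (by norm_num) |>.mp this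
    have : μ' - μs = 0 := norm_eq_zero.mp h5
    exact sub_eq_zero.mp this
  · exact hμs_ae
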